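/- Let b > 0 and let X₁, …, X_n be mutually independent random variables each taking values in [0,b], with S = X₁ + ⋯ + X_n. Then for every λ > 0, E[exp(λS)] ≤ (1 + ((e^{λb} − 1)/b)·(E[S]/n))^n. -/

import Mathlib

open MeasureTheory ProbabilityTheory Finset Matrix Filter

noncomputable section

namespace HSBM

/-- The set of (hyper)edges: all `d`-element subsets of `[n]`. -/
def edgeSet (n d : ℕ) : Finset (Finset (Fin n)) :=
  (Finset.univ : Finset (Fin n)).powersetCard d

/-- An edge is homogeneous w.r.t. a partition `Ψ` if all its nodes lie in one group. -/
def homogeneous {n k : ℕ} (Ψ : Fin n → Fin k) (e : Finset (Fin n)) : Prop :=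
  ∀ i ∈ e, ∀ j ∈ e, Ψ i = Ψ j

/-- Similarity matrix built from the weights of the edges in `E₁` only. -/
def simMatrixOn {n : ℕ} (d : ℕ) (E₁ : Finset (Finset (Fin n))) (W : Finset (Fin n) → ℝ) :
    Matrix (Fin n) (Fin n) ℝ := fun i j =>
  if i = j then 0
  else ∑ e ∈ edgeSet n d ∩ E₁, if ({i, j} : Finset (Fin n)) ⊆ e then W e else 0

/-- Similarity matrix `A` of a weighted hypergraph. -/
def simMatrix {n : ℕ} (d : ℕ) (W : Finset (Fin n) → ℝ) : Matrix (Fin n) (Fin n) ℝ :=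
  simMatrixOn d (edgeSet n d) W

/-- Processed similarity matrix `A⁰`: rows (and columns) whose sum exceeds
`c_thr · (1/n) · Σ_{i,j} A_{ij}` are zeroed out. -/
def processed {n : ℕ} (cthr : ℝ) (A : Matrix (Fin n) (Fin n) ℝ) : Matrix (Fin n) (Fin n) ℝ :=
  fun i j =>
    if cthr * ((1 : ℝ) / n) * ∑ a, ∑ b, A a b < ∑ l, A i l ∨
        cthr * ((1 : ℝ) / n) * ∑ a, ∑ b, A a b < ∑ l, A j l then 0
    else A i j

/-- `U` is an `n × k` matrix whose columns are orthonormal eigenvectors of `M`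
associated with its `k` largest eigenvalues. -/
def IsTopEigen {n k : ℕ} (M : Matrix (Fin n) (Fin n) ℝ) (U : Matrix (Fin n) (Fin k) ℝ) : Prop :=
  ∃ (v : Fin n → Fin n → ℝ) (lam : Fin n → ℝ),
    (∀ a b : Fin n, v a ⬝ᵥ v b = if a = b then (1 : ℝ) else 0) ∧
    (∀ a : Fin n, M.mulVec (v a) = lam a • v a) ∧
    (∀ a b : Fin n, a ≤ b → lam b ≤ lam a) ∧
    (∀ (j : Fin k) (hj : (j : ℕ) < n) (i : Fin n), U i j = v ⟨j, hj⟩ i)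

def clusterOf {n k : ℕ} (Φ : Fin n → Fin k) (j : Fin k) : Finset (Fin n) :=
  Finset.univ.filter fun i => Φ i = j

/-- `k`-means cost of a partition `Φ` of the rows of `U`. -/
def kmCost {n k : ℕ} (U : Matrix (Fin n) (Fin k) ℝ) (Φ : Fin n → Fin k) : ℝ :=
  ∑ j : Fin k, ∑ i ∈ clusterOf Φ j,
    ∑ m : Fin k,
      (U i m - (1 / ((clusterOf Φ j).card : ℝ)) * ∑ l ∈ clusterOf Φ j, U l m) ^ 2

/-- `Φ` is a `(1+ε)`-approximate `k`-means solution for the rows of `U`. -/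
def IsApproxKMeans {n k : ℕ} (ε : ℝ) (U : Matrix (Fin n) (Fin k) ℝ) (Φ : Fin n → Fin k) : Prop :=
  ∀ Φ' : Fin n → Fin k, kmCost U Φ ≤ (1 + ε) * kmCost U Φ'

/-- `Φ` is an output of HSC run on the edges in `E₁`. -/
def IsHSCOutputOn {n k : ℕ} (d : ℕ) (cthr ε : ℝ) (E₁ : Finset (Finset (Fin n)))
    (W : Finset (Fin n) → ℝ) (Φ : Fin n → Fin k) : Prop :=
  ∃ U : Matrix (Fin n) (Fin k) ℝ,
    IsTopEigen (processed cthr (simMatrixOn d E₁ W)) U ∧ IsApproxKMeans ε U Φ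

/-- `Φ` is an output of HSC. -/
def IsHSCOutput {n k : ℕ} (d : ℕ) (cthr ε : ℝ) (W : Finset (Fin n) → ℝ)
    (Φ : Fin n → Fin k) : Prop :=
  IsHSCOutputOn d cthr ε (edgeSet n d) W Φ

/-- `E^{(i)}(j)`: the edges of `E₂` containing `i` whose other nodes all lie in `Φ₀⁻¹(j)`. -/
def refineEdges {n k : ℕ} (E₂ : Finset (Finset (Fin n))) (Φ₀ : Fin n → Fin k)
    (i : Fin n) (j : Fin k) : Finset (Finset (Fin n)) :=
  E₂.filter fun e => i ∈ e ∧ ∀ l ∈ e, l ≠ i → Φ₀ l = j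

/-- Average weight over `E^{(i)}(j)`. -/
def avgWeight {n k : ℕ} (W : Finset (Fin n) → ℝ) (E₂ : Finset (Finset (Fin n)))
    (Φ₀ : Fin n → Fin k) (i : Fin n) (j : Fin k) : ℝ :=
  (∑ e ∈ refineEdges E₂ Φ₀ i j, W e) / ((refineEdges E₂ Φ₀ i j).card : ℝ)

/-- `Φ` is an output of HSCLR given realized weights `W` and split indicators `ξ`
(`ξ e = 1` iff `e ∈ E₁`). -/
def IsHSCLROutput {n k : ℕ} (d : ℕ) (cthr ε : ℝ) (W : Finset (Fin n) → ℝ)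
    (ξ : Finset (Fin n) → ℝ) (Φ : Fin n → Fin k) : Prop :=
  ∃ Φ₀ : Fin n → Fin k,
    IsHSCOutputOn d cthr ε ((edgeSet n d).filter fun e => ξ e = 1) W Φ₀ ∧
    ∀ (i : Fin n) (j : Fin k),
      avgWeight W ((edgeSet n d).filter fun e => ξ e ≠ 1) Φ₀ i j ≤
        avgWeight W ((edgeSet n d).filter fun e => ξ e ≠ 1) Φ₀ i (Φ i)

/-- Error fraction `err(Φ)`. -/
def errFrac {n k : ℕ} (Ψ Φ : Fin n → Fin k) : ℝ :=
  (⨅ π : Equiv.Perm (Fin k),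
    ((Finset.univ.filter fun i => Ψ i ≠ π (Φ i)).card : ℝ)) / n

/-- Size of the `j`-th cluster. -/
def csize {n k : ℕ} (Ψ : Fin n → Fin k) (j : Fin k) : ℕ :=
  (Finset.univ.filter fun i => Ψ i = j).card

def nmin {n k : ℕ} (Ψ : Fin n → Fin k) : ℕ := sInf (Set.range fun j => csize Ψ j)

def nmax {n k : ℕ} (Ψ : Fin n → Fin k) : ℕ := sSup (Set.range fun j => csize Ψ j)

/-- Worst-cluster error fraction `errr(Φ)`. -/
def errrFrac {n k : ℕ} (Ψ Φ : Fin n → Fin k) : ℝ :=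
  ⨅ π : Equiv.Perm (Fin k), ⨆ j : Fin k,
    ((Finset.univ.filter fun i => Ψ i = j ∧ π (Φ i) ≠ j).card : ℝ) / (csize Ψ j : ℝ)

/-- Membership matrix `Z` of a partition `Ψ`. -/
def memMatrix {n k : ℕ} (Ψ : Fin n → Fin k) : Matrix (Fin n) (Fin k) ℝ :=
  fun i j => if Ψ i = j then 1 else 0

/-- Spectral norm of a real square matrix. -/
def specNorm {n : ℕ} (M : Matrix (Fin n) (Fin n) ℝ) : ℝ :=
  ‖Matrix.toEuclideanCLM (𝕜 := ℝ) M‖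

theorem _root_.Matrix.isHermitian_transpose_mul_self {m n α : Type*} [Fintype m]
    [CommSemiring α] [StarRing α] [TrivialStar α] (A : Matrix m n α) : (Aᵀ * A).IsHermitian := by
  simpa [Matrix.conjTranspose_eq_transpose_of_trivial] using Matrix.isHermitian_conjTranspose_mul_self A

/-- Smallest nonzero singular value of a real square matrix. -/
def sigmaNZmin {m : ℕ} (M : Matrix (Fin m) (Fin m) ℝ) : ℝ :=
  sInf {r : ℝ | r ≠ 0 ∧ ∃ i : Fin m,
    r = Real.sqrt ((Matrix.isHermitian_transpose_mul_self M).eigenvalues i)}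

/-- Smallest singular value of a real square matrix. -/
def sigmaMin {m : ℕ} (M : Matrix (Fin m) (Fin m) ℝ) : ℝ :=
  sInf {r : ℝ | ∃ i : Fin m,
    r = Real.sqrt ((Matrix.isHermitian_transpose_mul_self M).eigenvalues i)}

/-- `den_M(S,T) = Σ_{i∈S} Σ_{j∈T} M_{ij}`. -/
def den {n : ℕ} (M : Matrix (Fin n) (Fin n) ℝ) (S T : Finset (Fin n)) : ℝ :=
  ∑ i ∈ S, ∑ j ∈ T, M i j

/-- `f_e(X) = 1` if all coordinates of `X` indexed by `e` agree, and `0` otherwise. -/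
def fval {nn : ℕ} (X : Fin nn → Bool) (e : Finset (Fin nn)) : ℝ :=
  if ∀ i ∈ e, ∀ j ∈ e, X i = X j then 1 else 0

/-- An instance of the weighted stochastic block model on a measurable space `Ω`. -/
structure WSBM (n d k : ℕ) (p q : ℝ) (Ω : Type*) [MeasurableSpace Ω] where
  μ : Measure Ω
  prob : IsProbabilityMeasure μ
  Ψ : Fin n → Fin k
  surj : Function.Surjective Ψ
  α : ℝ
  α_pos : 0 < α
  α_le_one : α ≤ 1
  W : Finset (Fin n) → Ω → ℝ
  W_meas : ∀ e, Measurable (W e)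
  W_range : ∀ e, ∀ᵐ ω ∂μ, W e ω ∈ Set.Icc (0 : ℝ) 1
  W_indep : iIndepFun W μ
  W_homo : ∀ e ∈ edgeSet n d, homogeneous Ψ e → ∫ ω, W e ω ∂μ = p * α
  W_hetero : ∀ e ∈ edgeSet n d, ¬ homogeneous Ψ e → ∫ ω, W e ω ∂μ = q * α

theorem amgm (n : ℕ) (hn : n ≠ 0) (a : Fin n → ℝ) (ha : ∀ i, 0 ≤ a i) :
    ∏ i, a i ≤ ((∑ i, a i) / n) ^ n := by
  have hn' : (0:ℝ) < n := by positivity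
  have h := Real.geom_mean_le_arith_mean_weighted Finset.univ (fun _ => (n:ℝ)⁻¹) a
    (fun i _ => by positivity) (by simp [Finset.card_univ, mul_comm]; field_simp) (fun i _ => ha i)
  have h2 : (∏ i, a i ^ ((n:ℝ)⁻¹)) ^ n = ∏ i, a i := by
    rw [← Finset.prod_pow]
    refine Finset.prod_congr rfl fun i _ => ?_
    rw [← Real.rpow_natCast (a i ^ ((n:ℝ)⁻¹)) n, ← Real.rpow_mul (ha i),
      inv_mul_cancel₀ hn'.ne', Real.rpow_one]
  calc ∏ i, a i = (∏ i, a i ^ ((n:ℝ)⁻¹)) ^ n := h2.symm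
    _ ≤ ((∑ i, a i) / n) ^ n := by
        apply pow_le_pow_left₀ (Finset.prod_nonneg fun i _ => Real.rpow_nonneg (ha i) _)
        calc (∏ i, a i ^ ((n:ℝ)⁻¹)) ≤ ∑ i, (n:ℝ)⁻¹ * a i := h
          _ = (∑ i, a i) / n := by rw [← Finset.mul_sum]; ring

theorem exp_le_lin (b t x : ℝ) (hb : 0 < b) (hx : x ∈ Set.Icc 0 b) :
    Real.exp (t * x) ≤ 1 + (Real.exp (t * b) - 1) / b * x := by
  obtain ⟨hx0, hxb⟩ := hx
  have h := convexOn_exp.2 (Set.mem_univ 0) (Set.mem_univ (t * b))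
    (show (0:ℝ) ≤ (b - x) / b by apply div_nonneg <;> linarith)
    (show (0:ℝ) ≤ x / b by positivity) (by field_simp; ring)
  simp only [smul_eq_mul, mul_zero, Real.exp_zero, mul_one] at h
  have hx' : 0 + x / b * (t * b) = t * x := by field_simp; ring
  rw [hx'] at h
  calc Real.exp (t * x) ≤ (b - x) / b + x / b * Real.exp (t * b) := h
    _ = 1 + (Real.exp (t * b) - 1) / b * x := by field_simp; ring


/-- moment-generating-function bound. -/
theorem statement10 (b : ℝ) (hb : 0 < b) (Ω : Type) [MeasurableSpace Ω] (μ : Measure Ω)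
    [IsProbabilityMeasure μ] (n : ℕ) (X : Fin n → Ω → ℝ)
    (hmeas : ∀ i, Measurable (X i))
    (hrange : ∀ i, ∀ᵐ ω ∂μ, X i ω ∈ Set.Icc (0 : ℝ) b)
    (hindep : iIndepFun X μ)
    (t : ℝ) (ht : 0 < t) :
    (∫ ω, Real.exp (t * ∑ i, X i ω) ∂μ) ≤
      (1 + (Real.exp (t * b) - 1) / b * ((∫ ω, ∑ i, X i ω ∂μ) / n)) ^ n := by
  rcases eq_or_ne n 0 with rfl | hn
  · simp
  set c := (Real.exp (t * b) - 1) / b with hc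
  have hc0 : 0 ≤ c := by
    apply div_nonneg _ hb.le
    have : (1:ℝ) ≤ Real.exp (t * b) := by
      rw [← Real.exp_zero]; exact Real.exp_le_exp.2 (by positivity)
    linarith
  -- integrability of X i
  have hXint : ∀ i, Integrable (X i) μ := fun i => by
    refine (integrable_const b).mono' (hmeas i).aestronglyMeasurable ?_
    filter_upwards [hrange i] with ω hω
    rw [Real.norm_eq_abs, abs_of_nonneg hω.1]; exact hω.2
  -- per-variable mgf bound
  have key : ∀ i, mgf (X i) μ t ≤ 1 + c * ∫ ω, X i ω ∂μ := by
    intro i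
    have hint1 : Integrable (fun ω => Real.exp (t * X i ω)) μ := by
      refine (integrable_const (Real.exp (t * b))).mono'
        (((hmeas i).const_mul t).exp).aestronglyMeasurable ?_
      filter_upwards [hrange i] with ω hω
      rw [Real.norm_eq_abs, abs_of_pos (Real.exp_pos _)]
      exact Real.exp_le_exp.2 (by nlinarith [hω.2, ht.le])
    have hint2 : Integrable (fun ω => 1 + c * X i ω) μ :=
      (integrable_const 1).add ((hXint i).const_mul c)
    have := integral_mono_ae hint1 hint2 (by
      filter_upwards [hrange i] with ω hω
      exact exp_le_lin b t (X i ω) hb hω)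
    calc mgf (X i) μ t = ∫ ω, Real.exp (t * X i ω) ∂μ := rfl
      _ ≤ ∫ ω, (1 + c * X i ω) ∂μ := this
      _ = 1 + c * ∫ ω, X i ω ∂μ := by
          rw [integral_add (integrable_const 1) ((hXint i).const_mul c),
            integral_const, integral_const_mul]
          simp
  have hμi0 : ∀ i, 0 ≤ ∫ ω, X i ω ∂μ := fun i =>
    integral_nonneg_of_ae ((hrange i).mono fun ω hω => hω.1)
  have ha : ∀ i, (0:ℝ) ≤ 1 + c * ∫ ω, X i ω ∂μ := fun i => by
    have := mul_nonneg hc0 (hμi0 i); linarith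
  -- step 1: mgf of sum
  have h1 : (∫ ω, Real.exp (t * ∑ i, X i ω) ∂μ) = ∏ i, mgf (X i) μ t := by
    rw [← hindep.mgf_sum hmeas Finset.univ]
    unfold mgf
    congr 1; funext ω; simp
  rw [h1]
  have h2 : ∏ i, mgf (X i) μ t ≤ ∏ i, (1 + c * ∫ ω, X i ω ∂μ) :=
    Finset.prod_le_prod (fun i _ => mgf_nonneg) (fun i _ => key i)
  have h3 : ∏ i, (1 + c * ∫ ω, X i ω ∂μ) ≤
      ((∑ i, (1 + c * ∫ ω, X i ω ∂μ)) / n) ^ n :=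
    amgm n hn _ ha
  have h4 : (∑ i, (1 + c * ∫ ω, X i ω ∂μ)) / n
      = 1 + c * ((∫ ω, ∑ i, X i ω ∂μ) / n) := by
    rw [integral_finset_sum _ fun i _ => hXint i, Finset.sum_add_distrib, ← Finset.mul_sum]
    have hn' : (0:ℝ) < n := by positivity
    field_simp
    simp
  rw [h4] at h3
  exact le_trans h2 h3


end HSBM
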